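/- For any nonempty compact metric spaces X and Y there exists an optimal correspondence between them, i.e. a correspondence R ⊆ X × Y with d_GH(X,Y) = (1/2)·dis R. -/

import Mathlib

/-- A relation `σ ⊆ X × Y` is a correspondence if both canonical projections
of `σ` to `X` and to `Y` are surjective. -/
def IsCorrespondence {X Y : Type*} (σ : Set (X × Y)) : Prop :=
  (∀ x : X, ∃ y : Y, (x, y) ∈ σ) ∧ (∀ y : Y, ∃ x : X, (x, y) ∈ σ)

/-- The distortion of a relation `σ ⊆ X × Y` between metric spaces:
`dis σ = sup{ ||xx'| − |yy'|| : (x,y), (x',y') ∈ σ }`. -/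
noncomputable def dis {X Y : Type*} [MetricSpace X] [MetricSpace Y] (σ : Set (X × Y)) : ℝ :=
  sSup {d : ℝ | ∃ p ∈ σ, ∃ q ∈ σ, d = |dist p.1 q.1 - dist p.2 q.2|}

open Metric Set GromovHausdorff

/-- For any nonempty compact metric spaces `X` and `Y` there exists an optimal
correspondence, i.e. a correspondence `R ⊆ X × Y` with `d_GH(X,Y) = (1/2)·dis R`. -/
theorem exists_optimal_correspondence
    (X Y : Type*) [MetricSpace X] [MetricSpace Y]
    [CompactSpace X] [CompactSpace Y] [Nonempty X] [Nonempty Y] :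
    ∃ R : Set (X × Y), IsCorrespondence R ∧
      GromovHausdorff.ghDist X Y = (1 / 2) * dis R := by
  set f := optimalGHInjl X Y with hf
  set g := optimalGHInjr X Y with hg
  have hfI : Isometry f := isometry_optimalGHInjl X Y
  have hgI : Isometry g := isometry_optimalGHInjr X Y
  set H : ℝ := ghDist X Y with hH
  have hHd : hausdorffDist (range f) (range g) = H := hausdorffDist_optimal
  have hcf : IsCompact (range f) := isCompact_range hfI.continuous
  have hcg : IsCompact (range g) := isCompact_range hgI.continuous
  have hne : EMetric.hausdorffEdist (range f) (range g) ≠ ⊤ :=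
    hausdorffEdist_ne_top_of_nonempty_of_bounded (range_nonempty f) (range_nonempty g)
      hcf.isBounded hcg.isBounded
  -- the candidate correspondence
  set R : Set (X × Y) := {p | dist (f p.1) (g p.2) ≤ H} with hR
  -- R is a correspondence
  have hcorr : IsCorrespondence R := by
    constructor
    · intro x
      obtain ⟨z, hz, hdz⟩ := hcg.exists_infDist_eq_dist (range_nonempty g) (f x)
      obtain ⟨y, rfl⟩ := hz
      refine ⟨y, ?_⟩
      have h1 : infDist (f x) (range g) ≤ H := by
        rw [← hHd]
        exact infDist_le_hausdorffDist_of_mem (mem_range_self x) hne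
      simpa [hR, ← hdz] using h1
    · intro y
      obtain ⟨z, hz, hdz⟩ := hcf.exists_infDist_eq_dist (range_nonempty f) (g y)
      obtain ⟨x, rfl⟩ := hz
      refine ⟨x, ?_⟩
      have h1 : infDist (g y) (range f) ≤ H := by
        rw [← hHd]
        rw [hausdorffDist_comm]
        exact infDist_le_hausdorffDist_of_mem (mem_range_self y)
          (by rw [EMetric.hausdorffEdist_comm]; exact hne)
      simp only [hR, mem_setOf_eq]
      rw [dist_comm]
      simpa [← hdz] using h1
  obtain ⟨x₀⟩ := ‹Nonempty X›
  obtain ⟨y₀, hy₀⟩ := hcorr.1 x₀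
  have hRne : R.Nonempty := ⟨(x₀, y₀), hy₀⟩
  -- every distortion value is at most 2 * H
  set S : Set ℝ := {d : ℝ | ∃ p ∈ R, ∃ q ∈ R, d = |dist p.1 q.1 - dist p.2 q.2|} with hS
  have hSne : S.Nonempty := ⟨_, (x₀, y₀), hy₀, (x₀, y₀), hy₀, rfl⟩
  have hbound : ∀ d ∈ S, d ≤ 2 * H := by
    rintro d ⟨p, hp, q, hq, rfl⟩
    have hp' : dist (f p.1) (g p.2) ≤ H := hp
    have hq' : dist (f q.1) (g q.2) ≤ H := hq
    have h1 : |dist p.1 q.1 - dist p.2 q.2| ≤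
        dist (f p.1) (g p.2) + dist (f q.1) (g q.2) := by
      have h2 := dist_dist_dist_le (f p.1) (f q.1) (g p.2) (g q.2)
      rwa [Real.dist_eq, hfI.dist_eq, hgI.dist_eq] at h2
    linarith
  have hSbdd : BddAbove S := ⟨2 * H, hbound⟩
  have hdis_le : dis R ≤ 2 * H := csSup_le hSne hbound
  have hdis_nonneg : 0 ≤ dis R := by
    refine le_csSup hSbdd ?_
    refine ⟨(x₀, y₀), hy₀, (x₀, y₀), hy₀, by simp⟩
  -- the reverse inequality: ghDist ≤ dis R / 2
  have hrev : H ≤ dis R / 2 := by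
    refine le_of_forall_pos_le_add fun δ δ0 => ?_
    set ε : ℝ := dis R / 2 + δ / 2 with hε
    have ε0 : 0 < ε := by positivity
    haveI : Nonempty R := hRne.to_subtype
    have Hdist : ∀ p q : R, |dist (p : X × Y).1 (q : X × Y).1 -
        dist (p : X × Y).2 (q : X × Y).2| ≤ 2 * ε := by
      intro p q
      have h1 : |dist (p : X × Y).1 (q : X × Y).1 - dist (p : X × Y).2 (q : X × Y).2| ≤ dis R :=
        le_csSup hSbdd ⟨p, p.2, q, q.2, rfl⟩
      have : dis R ≤ 2 * ε := by rw [hε]; linarith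
      linarith
    letI : MetricSpace (X ⊕ Y) :=
      glueMetricApprox (fun p : R => (p : X × Y).1) (fun p : R => (p : X × Y).2) ε ε0 Hdist
    have hinl : Isometry (Sum.inl : X → X ⊕ Y) := Isometry.of_dist_eq fun a b => rfl
    have hinr : Isometry (Sum.inr : Y → X ⊕ Y) := Isometry.of_dist_eq fun a b => rfl
    have hglue : ∀ p : R, dist (Sum.inl (p : X × Y).1 : X ⊕ Y) (Sum.inr (p : X × Y).2) = ε :=
      fun p => glueDist_glued_points (fun p : R => (p : X × Y).1)
        (fun p : R => (p : X × Y).2) ε p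
    have hhd : hausdorffDist (range (Sum.inl : X → X ⊕ Y)) (range (Sum.inr : Y → X ⊕ Y)) ≤ ε := by
      refine hausdorffDist_le_of_mem_dist ε0.le ?_ ?_
      · rintro _ ⟨x, rfl⟩
        obtain ⟨y, hy⟩ := hcorr.1 x
        exact ⟨Sum.inr y, mem_range_self y, le_of_eq (hglue ⟨(x, y), hy⟩)⟩
      · rintro _ ⟨y, rfl⟩
        obtain ⟨x, hx⟩ := hcorr.2 y
        refine ⟨Sum.inl x, mem_range_self x, ?_⟩
        rw [dist_comm]
        exact le_of_eq (hglue ⟨(x, y), hx⟩)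
    calc H ≤ hausdorffDist (range (Sum.inl : X → X ⊕ Y)) (range (Sum.inr : Y → X ⊕ Y)) :=
          ghDist_le_hausdorffDist hinl hinr
      _ ≤ ε := hhd
      _ ≤ dis R / 2 + δ := by rw [hε]; linarith
  refine ⟨R, hcorr, ?_⟩
  have : H = dis R / 2 := le_antisymm hrev (by linarith)
  rw [this]; ring
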